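/- With the sum-of-weighted-ratios setup, fix y = (y_1, …, y_n) ∈ (ℂ^ℓ)^n, let D_i(y) = ∑_{j=1}^n ω_j B_{ji}^H y_j y_j^H B_{ji}, and choose real numbers λ_i ≥ λ_max(D_i(y)) (the largest eigenvalue of the Hermitian positive semidefinite matrix D_i(y)). Then for all x = (x_1, …, x_n) and z = (z_1, …, z_n) in (ℂ^d)^n, f_t(x, y, z) ≤ f_q(x, y), and equality holds when z_i = x_i for all i. -/

import Mathlib

open Matrix ComplexOrder

/-- `Dᵢ(y) = ∑ⱼ ωⱼ Bⱼᵢᴴ yⱼ yⱼᴴ Bⱼᵢ`. -/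
noncomputable def Dmat {n d ℓ : ℕ} (ω : Fin n → ℝ)
    (B : Fin n → Fin n → Matrix (Fin ℓ) (Fin d) ℂ)
    (y : Fin n → Fin ℓ → ℂ) (i : Fin n) : Matrix (Fin d) (Fin d) ℂ :=
  ∑ j, (ω j : ℂ) • ((B j i)ᴴ * vecMulVec (y j) (star (y j)) * B j i)

/-- Quadratic-transform surrogate
`f_q(x, y) = ∑ᵢ ωᵢ [2 Re{xᵢᴴ Aᵢᴴ yᵢ} − ∑ⱼ yᵢᴴ Bᵢⱼ xⱼ xⱼᴴ Bᵢⱼᴴ yᵢ]`. -/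
noncomputable def fq {n d ℓ : ℕ} (ω : Fin n → ℝ)
    (A : Fin n → Matrix (Fin ℓ) (Fin d) ℂ)
    (B : Fin n → Fin n → Matrix (Fin ℓ) (Fin d) ℂ)
    (x : Fin n → Fin d → ℂ) (y : Fin n → Fin ℓ → ℂ) : ℝ :=
  ∑ i, ω i * (2 * (star (A i *ᵥ x i) ⬝ᵥ y i).re
    - ∑ j, (star (y i) ⬝ᵥ (B i j * vecMulVec (x j) (star (x j)) * (B i j)ᴴ) *ᵥ y i).re)

/-- Nonhomogeneous surrogate
`f_t(x, y, z) = ∑ᵢ [2 Re{ωᵢ xᵢᴴ Aᵢᴴ yᵢ + xᵢᴴ(λᵢ I − Dᵢ(y)) zᵢ}`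
`+ zᵢᴴ(Dᵢ(y) − λᵢ I) zᵢ − λᵢ xᵢᴴ xᵢ]`. -/
noncomputable def ft {n d ℓ : ℕ} (ω : Fin n → ℝ) (lam : Fin n → ℝ)
    (A : Fin n → Matrix (Fin ℓ) (Fin d) ℂ)
    (B : Fin n → Fin n → Matrix (Fin ℓ) (Fin d) ℂ)
    (x : Fin n → Fin d → ℂ) (y : Fin n → Fin ℓ → ℂ)
    (z : Fin n → Fin d → ℂ) : ℝ :=
  ∑ i, (2 * ((ω i : ℂ) * (star (A i *ᵥ x i) ⬝ᵥ y i)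
        + star (x i) ⬝ᵥ ((lam i : ℂ) • (1 : Matrix (Fin d) (Fin d) ℂ)
            - Dmat ω B y i) *ᵥ z i).re
    + (star (z i) ⬝ᵥ (Dmat ω B y i
        - (lam i : ℂ) • (1 : Matrix (Fin d) (Fin d) ℂ)) *ᵥ z i).re
    - lam i * (star (x i) ⬝ᵥ x i).re)

/- ### Auxiliary lemmas -/

lemma aux_vvM {d : ℕ} (v w : Fin d → ℂ) :
    vecMulVec v (star v) *ᵥ w = (star v ⬝ᵥ w) • v := by
  funext k
  simp only [vecMulVec_apply, mulVec, dotProduct, Pi.smul_apply, smul_eq_mul,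
    Finset.sum_mul, Finset.mul_sum, Pi.star_apply]
  congr 1; ext j; ring

lemma aux_L1 {d ℓ : ℕ} (B : Matrix (Fin ℓ) (Fin d) ℂ) (u : Fin ℓ → ℂ) (v : Fin d → ℂ) :
    star u ⬝ᵥ (B * vecMulVec v (star v) * Bᴴ) *ᵥ u
      = (star u ⬝ᵥ B *ᵥ v) * star (star u ⬝ᵥ B *ᵥ v) := by
  have h1 : (B * vecMulVec v (star v) * Bᴴ) *ᵥ u
      = (star v ⬝ᵥ Bᴴ *ᵥ u) • (B *ᵥ v) := by
    rw [← mulVec_mulVec, ← mulVec_mulVec, aux_vvM, mulVec_smul]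
  have h2 : star (star u ⬝ᵥ B *ᵥ v) = star v ⬝ᵥ Bᴴ *ᵥ u := by
    rw [← star_dotProduct, dotProduct_mulVec, star_mulVec]
  rw [h1, dotProduct_smul, smul_eq_mul, ← h2]; ring

/-- conjugate symmetry of the Hermitian quadratic form -/
lemma aux_conj_quad {d : ℕ} {M : Matrix (Fin d) (Fin d) ℂ} (hM : M.IsHermitian)
    (a b : Fin d → ℂ) :
    star (star a ⬝ᵥ M *ᵥ b) = star b ⬝ᵥ M *ᵥ a := by
  rw [← star_dotProduct, dotProduct_mulVec, star_mulVec, hM.eq, ← dotProduct_mulVec]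

/-- `λ I - D` is PSD when all eigenvalues of the Hermitian `D` are `≤ λ`. -/
lemma aux_sum_mulVec {n d : ℕ} (M : Fin n → Matrix (Fin d) (Fin d) ℂ) (v : Fin d → ℂ) :
    (∑ j, M j) *ᵥ v = ∑ j, M j *ᵥ v := by
  funext k
  simp only [mulVec, dotProduct, Matrix.sum_apply, Finset.sum_apply, Finset.sum_mul]
  rw [Finset.sum_comm]

lemma aux_dot_sum {n d : ℕ} (v : Fin d → ℂ) (w : Fin n → Fin d → ℂ) :
    v ⬝ᵥ (∑ j, w j) = ∑ j, v ⬝ᵥ w j := by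
  simp only [dotProduct, Finset.sum_apply, Finset.mul_sum]
  rw [Finset.sum_comm]

/-- `λ I - D` is PSD when all eigenvalues of the Hermitian `D` are `≤ λ`. -/
lemma aux_psdM {d : ℕ} {D : Matrix (Fin d) (Fin d) ℂ} (hD : D.IsHermitian)
    (lam : ℝ) (h : ∀ j, hD.eigenvalues j ≤ lam) :
    ((lam : ℂ) • (1 : Matrix (Fin d) (Fin d) ℂ) - D).PosSemidef := by
  set U : Matrix (Fin d) (Fin d) ℂ := (hD.eigenvectorUnitary : Matrix (Fin d) (Fin d) ℂ)
    with hUdef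
  have hUU : U * Uᴴ = 1 := by
    rw [← Matrix.star_eq_conjTranspose]
    exact Matrix.mem_unitaryGroup_iff.mp hD.eigenvectorUnitary.2
  have hspec : D = U * diagonal (RCLike.ofReal ∘ hD.eigenvalues) * Uᴴ := by
    have := hD.spectral_theorem
    simp only [Unitary.conjStarAlgAut_apply, Unitary.coe_star, Matrix.star_eq_conjTranspose] at this
    exact this
  have hdecomp : (lam : ℂ) • (1 : Matrix (Fin d) (Fin d) ℂ) - D
      = U * diagonal (fun j => ((lam - hD.eigenvalues j : ℝ) : ℂ)) * Uᴴ := by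
    have hdd : diagonal (fun j : Fin d => ((lam - hD.eigenvalues j : ℝ) : ℂ))
        = (lam : ℂ) • (1 : Matrix (Fin d) (Fin d) ℂ)
          - diagonal (RCLike.ofReal ∘ hD.eigenvalues) := by
      have hfun : (fun j : Fin d => ((lam - hD.eigenvalues j : ℝ) : ℂ))
          = fun j => (lam : ℂ) - (RCLike.ofReal ∘ hD.eigenvalues) j := by
        funext j; push_cast; simp [RCLike.ofReal]
      rw [hfun, ← diagonal_sub, smul_one_eq_diagonal]
    rw [hdd, Matrix.mul_sub, Matrix.sub_mul, ← hspec]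
    congr 1
    rw [Matrix.mul_smul, mul_one, Matrix.smul_mul, hUU]
  rw [hdecomp]
  exact (posSemidef_diagonal_iff.mpr fun j => by
    rw [Complex.zero_le_real]; linarith [h j]).mul_mul_conjTranspose_same U

/-- Per-index algebraic identity. -/
lemma aux_per_i {d : ℕ} {D : Matrix (Fin d) (Fin d) ℂ} (hD : D.IsHermitian)
    (lam ω : ℝ) (c : ℂ) (a b : Fin d → ℂ) :
    (ω * (2 * c.re) - (star a ⬝ᵥ D *ᵥ a).re)
      - (2 * ((ω : ℂ) * c
            + star a ⬝ᵥ ((lam : ℂ) • (1 : Matrix (Fin d) (Fin d) ℂ) - D) *ᵥ b).re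
        + (star b ⬝ᵥ (D - (lam : ℂ) • (1 : Matrix (Fin d) (Fin d) ℂ)) *ᵥ b).re
        - lam * (star a ⬝ᵥ a).re)
      = (star (a - b) ⬝ᵥ ((lam : ℂ) • (1 : Matrix (Fin d) (Fin d) ℂ) - D)
          *ᵥ (a - b)).re := by
  set M : Matrix (Fin d) (Fin d) ℂ := (lam : ℂ) • (1 : Matrix (Fin d) (Fin d) ℂ) - D with hMdef
  have hMherm : M.IsHermitian := by
    unfold M
    refine Matrix.IsHermitian.sub ?_ hD
    unfold Matrix.IsHermitian
    rw [conjTranspose_smul, conjTranspose_one, Complex.star_def, Complex.conj_ofReal]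
  have hMa : ∀ v : Fin d → ℂ, M *ᵥ v = (lam : ℂ) • v - D *ᵥ v := by
    intro v
    rw [hMdef, sub_mulVec, smul_mulVec, one_mulVec]
  have hMaa : (star a ⬝ᵥ M *ᵥ a).re = lam * (star a ⬝ᵥ a).re - (star a ⬝ᵥ D *ᵥ a).re := by
    rw [hMa, dotProduct_sub, dotProduct_smul, Complex.sub_re, smul_eq_mul,
      Complex.re_ofReal_mul]
  have hDb : D - (lam : ℂ) • (1 : Matrix (Fin d) (Fin d) ℂ) = -M := by
    rw [hMdef, neg_sub]
  have hsym : (star b ⬝ᵥ M *ᵥ a).re = (star a ⬝ᵥ M *ᵥ b).re := by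
    rw [← aux_conj_quad hMherm a b, Complex.star_def, Complex.conj_re]
  have hRHS : (star (a - b) ⬝ᵥ M *ᵥ (a - b)).re
      = (star a ⬝ᵥ M *ᵥ a).re - 2 * (star a ⬝ᵥ M *ᵥ b).re + (star b ⬝ᵥ M *ᵥ b).re := by
    rw [show star (a - b) = star a - star b from star_sub a b, mulVec_sub,
      sub_dotProduct, dotProduct_sub, dotProduct_sub, Complex.sub_re, Complex.sub_re,
      Complex.sub_re, hsym]
    ring
  rw [hDb, neg_mulVec, dotProduct_neg, Complex.neg_re, hRHS, Complex.add_re,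
    Complex.mul_re]
  simp only [Complex.ofReal_re, Complex.ofReal_im, zero_mul, sub_zero]
  linarith [hMaa]

/-- The double-sum swap identity. -/
lemma aux_swap {n d ℓ : ℕ} (ω : Fin n → ℝ)
    (B : Fin n → Fin n → Matrix (Fin ℓ) (Fin d) ℂ)
    (y : Fin n → Fin ℓ → ℂ) (x : Fin n → Fin d → ℂ) :
    ∑ i, ω i * ∑ j,
        (star (y i) ⬝ᵥ (B i j * vecMulVec (x j) (star (x j)) * (B i j)ᴴ) *ᵥ y i).re
      = ∑ i, (star (x i) ⬝ᵥ Dmat ω B y i *ᵥ x i).re := by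
  have hterm : ∀ i j, (star (y i) ⬝ᵥ (B i j * vecMulVec (x j) (star (x j))
        * (B i j)ᴴ) *ᵥ y i).re
      = ((star (x j) ⬝ᵥ (B i j)ᴴ *ᵥ y i) * star (star (x j) ⬝ᵥ (B i j)ᴴ *ᵥ y i)).re := by
    intro i j
    rw [aux_L1]
    have h2 : star (star (y i) ⬝ᵥ B i j *ᵥ x j) = star (x j) ⬝ᵥ (B i j)ᴴ *ᵥ y i := by
      rw [← star_dotProduct, dotProduct_mulVec, star_mulVec]
    rw [← h2, star_star, mul_comm]
  have hD : ∀ i, (star (x i) ⬝ᵥ Dmat ω B y i *ᵥ x i).re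
      = ∑ j, ω j * ((star (x i) ⬝ᵥ (B j i)ᴴ *ᵥ y j)
          * star (star (x i) ⬝ᵥ (B j i)ᴴ *ᵥ y j)).re := by
    intro i
    rw [Dmat, aux_sum_mulVec, aux_dot_sum, Complex.re_sum]
    refine Finset.sum_congr rfl fun j _ => ?_
    rw [smul_mulVec, dotProduct_smul, smul_eq_mul, Complex.re_ofReal_mul]
    congr 1
    have := aux_L1 (B j i)ᴴ (x i) (y j)
    rw [conjTranspose_conjTranspose] at this
    rw [this]
  simp only [hterm, Finset.mul_sum, hD]
  exact Finset.sum_comm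

theorem ft_le_fq {n d ℓ : ℕ} (ω : Fin n → ℝ) (hω : ∀ i, 0 < ω i)
    (A : Fin n → Matrix (Fin ℓ) (Fin d) ℂ)
    (B : Fin n → Fin n → Matrix (Fin ℓ) (Fin d) ℂ)
    (y : Fin n → Fin ℓ → ℂ) (lam : Fin n → ℝ)
    (hHerm : ∀ i, (Dmat ω B y i).IsHermitian)
    (hlam : ∀ i j, (hHerm i).eigenvalues j ≤ lam i) :
    (∀ (x z : Fin n → Fin d → ℂ), ft ω lam A B x y z ≤ fq ω A B x y) ∧
    (∀ x : Fin n → Fin d → ℂ, ft ω lam A B x y x = fq ω A B x y) := by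
  have key : ∀ (x z : Fin n → Fin d → ℂ),
      fq ω A B x y - ft ω lam A B x y z
        = ∑ i, (star (x i - z i) ⬝ᵥ ((lam i : ℂ) • (1 : Matrix (Fin d) (Fin d) ℂ)
            - Dmat ω B y i) *ᵥ (x i - z i)).re := by
    intro x z
    rw [fq, ft]
    have hfq : ∀ i, ω i * (2 * (star (A i *ᵥ x i) ⬝ᵥ y i).re
        - ∑ j, (star (y i) ⬝ᵥ (B i j * vecMulVec (x j) (star (x j)) * (B i j)ᴴ) *ᵥ y i).re)
        = ω i * (2 * (star (A i *ᵥ x i) ⬝ᵥ y i).re)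
          - ω i * ∑ j, (star (y i) ⬝ᵥ (B i j * vecMulVec (x j) (star (x j))
              * (B i j)ᴴ) *ᵥ y i).re := by
      intro i; ring
    simp only [hfq]
    rw [Finset.sum_sub_distrib, aux_swap, ← Finset.sum_sub_distrib, ← Finset.sum_sub_distrib]
    refine Finset.sum_congr rfl fun i _ => ?_
    have := aux_per_i (hHerm i) (lam i) (ω i) (star (A i *ᵥ x i) ⬝ᵥ y i) (x i) (z i)
    linarith [this]
  constructor
  · intro x z
    have h := key x z
    have hnn : 0 ≤ ∑ i, (star (x i - z i) ⬝ᵥ ((lam i : ℂ) • (1 : Matrix (Fin d) (Fin d) ℂ)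
        - Dmat ω B y i) *ᵥ (x i - z i)).re := by
      refine Finset.sum_nonneg fun i _ => ?_
      exact (aux_psdM (hHerm i) (lam i) (hlam i)).re_dotProduct_nonneg _
    linarith
  · intro x
    have h := key x x
    simp only [sub_self] at h
    have : ∀ i : Fin n, (star (0 : Fin d → ℂ) ⬝ᵥ ((lam i : ℂ) • (1 : Matrix (Fin d) (Fin d) ℂ)
        - Dmat ω B y i) *ᵥ (0 : Fin d → ℂ)).re = 0 := by
      intro i; simp
    rw [Finset.sum_congr rfl fun i _ => this i, Finset.sum_const, smul_zero] at h
    linarith
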